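/- arXiv:0909.5130 — 3 statements merged into one kernel-verified Lean document; each statement's English description precedes it below -/
import Mathlib

section
/- Let φ be a non-negative non-increasing function on (0,∞) with ∫₀^∞ φ(u) u^{-1/2} du < ∞. Then lim_{t→∞} √t ∫₀^t φ(u) (u(t−u))^{-1/2} du = ∫₀^∞ φ(u) u^{-1/2} du. -/
open MeasureTheory Filter Set

set_option maxHeartbeats 1000000

/-- if `φ ≥ 0` is non-increasing on `(0,∞)` with `∫₀^∞ φ(u) u^{-1/2} du < ∞`,
then `√t ∫₀^t φ(u) (u(t-u))^{-1/2} du → ∫₀^∞ φ(u) u^{-1/2} du` as `t → ∞`. -/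
theorem tendsto_sqrt_mul_integral_arcsine
    (φ : ℝ → ℝ) (hnonneg : ∀ u, 0 < u → 0 ≤ φ u) (hanti : AntitoneOn φ (Ioi 0))
    (hint : IntegrableOn (fun u => φ u / Real.sqrt u) (Ioi 0)) :
    Tendsto (fun t => Real.sqrt t * ∫ u in Ioo 0 t, φ u / Real.sqrt (u * (t - u)))
      atTop (nhds (∫ u in Ioi 0, φ u / Real.sqrt u)) := by
  set f : ℝ → ℝ := fun u => φ u / Real.sqrt u with hf
  set h : ℝ → ℝ → ℝ := fun t u => Real.sqrt t * (φ u / Real.sqrt (u * (t - u))) with hh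
  -- a.e. strong measurability of φ on (0,∞)
  have hφm : AEStronglyMeasurable φ (volume.restrict (Ioi 0)) := by
    have h1 : AEStronglyMeasurable (fun u => f u * Real.sqrt u) (volume.restrict (Ioi 0)) :=
      hint.aestronglyMeasurable.mul Real.continuous_sqrt.aestronglyMeasurable
    refine h1.congr ?_
    filter_upwards [ae_restrict_mem measurableSet_Ioi] with u hu
    have hsu : Real.sqrt u ≠ 0 := ne_of_gt (Real.sqrt_pos.mpr hu)
    simp only [hf]
    exact div_mul_cancel₀ _ hsu
  have hhm : ∀ t : ℝ, AEStronglyMeasurable (h t) (volume.restrict (Ioi 0)) := by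
    intro t
    have hm : Measurable fun u : ℝ => Real.sqrt t / Real.sqrt (u * (t - u)) :=
      measurable_const.div
        (Real.continuous_sqrt.measurable.comp
          (measurable_id.mul (measurable_const.sub measurable_id)))
    have haux : AEStronglyMeasurable (fun u => φ u * (Real.sqrt t / Real.sqrt (u * (t - u))))
        (volume.restrict (Ioi 0)) := hφm.mul hm.aestronglyMeasurable
    refine haux.congr ?_
    filter_upwards with u
    rw [hh]
    ring
  -- nonnegativity of h
  have hnn : ∀ t u : ℝ, 0 < u → 0 ≤ h t u := by
    intro t u hu
    exact mul_nonneg (Real.sqrt_nonneg _)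
      (div_nonneg (hnonneg u hu) (Real.sqrt_nonneg _))
  -- bound on (0, t/2)
  have hbd1 : ∀ t : ℝ, 0 < t → ∀ u ∈ Ioo (0:ℝ) (t/2), h t u ≤ Real.sqrt 2 * f u := by
    intro t ht u hu
    obtain ⟨hu0, hut⟩ := hu
    have hsu : (0:ℝ) < Real.sqrt u := Real.sqrt_pos.mpr hu0
    have hstu : (0:ℝ) < Real.sqrt (t - u) := Real.sqrt_pos.mpr (by linarith)
    have h1 : Real.sqrt (u * (t - u)) = Real.sqrt u * Real.sqrt (t - u) :=
      Real.sqrt_mul hu0.le _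
    have h2 : Real.sqrt t ≤ Real.sqrt 2 * Real.sqrt (t - u) := by
      rw [← Real.sqrt_mul (by norm_num : (0:ℝ) ≤ 2)]
      exact Real.sqrt_le_sqrt (by linarith)
    have hφu : 0 ≤ φ u := hnonneg u hu0
    rw [hh]
    simp only
    rw [h1, mul_comm]
    calc φ u / (Real.sqrt u * Real.sqrt (t - u)) * Real.sqrt t
        ≤ φ u / (Real.sqrt u * Real.sqrt (t - u)) * (Real.sqrt 2 * Real.sqrt (t - u)) :=
          mul_le_mul_of_nonneg_left h2 (div_nonneg hφu (by positivity))
      _ = Real.sqrt 2 * f u := by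
          rw [hf]
          field_simp
  -- integrability on (0, t/2)
  have hInt1 : ∀ t : ℝ, 0 < t → IntegrableOn (h t) (Ioo 0 (t/2)) := by
    intro t ht
    have hb : IntegrableOn (fun u => Real.sqrt 2 * f u) (Ioo 0 (t/2)) :=
      (hint.mono_set Ioo_subset_Ioi_self).const_mul _
    refine Integrable.mono' hb
      ((hhm t).mono_measure (Measure.restrict_mono Ioo_subset_Ioi_self le_rfl)) ?_
    filter_upwards [ae_restrict_mem measurableSet_Ioo] with u hu
    rw [Real.norm_eq_abs, abs_of_nonneg (hnn t u hu.1)]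
    exact hbd1 t ht u hu
  -- bound on [t/2, t)
  have hbd2 : ∀ t : ℝ, 0 < t → ∀ u ∈ Ico (t/2) t,
      h t u ≤ Real.sqrt 2 * φ (t/2) * (t - u) ^ (-(1/2) : ℝ) := by
    intro t ht u hu
    obtain ⟨hu1, hu2⟩ := hu
    have hu0 : (0:ℝ) < u := lt_of_lt_of_le (by linarith) hu1
    have htu : (0:ℝ) < t - u := by linarith
    have hsu : (0:ℝ) < Real.sqrt u := Real.sqrt_pos.mpr hu0
    have hstu : (0:ℝ) < Real.sqrt (t - u) := Real.sqrt_pos.mpr htu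
    have hsh : (0:ℝ) < Real.sqrt (t/2) := Real.sqrt_pos.mpr (by linarith)
    have h1 : Real.sqrt (u * (t - u)) = Real.sqrt u * Real.sqrt (t - u) :=
      Real.sqrt_mul hu0.le _
    have h2 : Real.sqrt t = Real.sqrt 2 * Real.sqrt (t/2) := by
      nth_rewrite 1 [show t = 2 * (t/2) by ring]
      rw [Real.sqrt_mul (by norm_num : (0:ℝ) ≤ 2)]
    have hφle : φ u ≤ φ (t/2) := hanti (mem_Ioi.mpr (by linarith)) (mem_Ioi.mpr hu0) hu1
    have h3 : φ u / (Real.sqrt u * Real.sqrt (t - u))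
        ≤ φ (t/2) / (Real.sqrt (t/2) * Real.sqrt (t - u)) := by
      apply div_le_div₀ (le_trans (hnonneg u hu0) hφle) hφle (by positivity)
      exact mul_le_mul_of_nonneg_right (Real.sqrt_le_sqrt hu1) hstu.le
    have h4 : (t - u) ^ (-(1/2) : ℝ) = (Real.sqrt (t - u))⁻¹ := by
      rw [Real.rpow_neg htu.le, Real.sqrt_eq_rpow]
    rw [hh]
    simp only
    rw [h1, h4]
    calc Real.sqrt t * (φ u / (Real.sqrt u * Real.sqrt (t - u)))
        ≤ Real.sqrt t * (φ (t/2) / (Real.sqrt (t/2) * Real.sqrt (t - u))) :=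
          mul_le_mul_of_nonneg_left h3 (Real.sqrt_nonneg _)
      _ = Real.sqrt 2 * φ (t/2) * (Real.sqrt (t - u))⁻¹ := by
          rw [h2]
          field_simp
  -- integrability of the rpow bound on [t/2, t)
  have hIntBd2 : ∀ t : ℝ, 0 < t →
      IntegrableOn (fun u : ℝ => (t - u) ^ (-(1/2) : ℝ)) (Ico (t/2) t) := by
    intro t ht
    have h1 : IntervalIntegrable (fun x : ℝ => x ^ (-(1/2) : ℝ)) volume 0 (t/2) :=
      intervalIntegral.intervalIntegrable_rpow' (by norm_num)
    have h2 := h1.comp_sub_left t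
    rw [show t - 0 = t by ring, show t - t/2 = t/2 by ring] at h2
    have h3 : IntervalIntegrable (fun u : ℝ => (t - u) ^ (-(1/2) : ℝ)) volume (t/2) t := h2.symm
    rw [intervalIntegrable_iff_integrableOn_Icc_of_le (by linarith : t/2 ≤ t)] at h3
    exact h3.mono_set Ico_subset_Icc_self
  -- integrability on [t/2, t)
  have hInt2 : ∀ t : ℝ, 0 < t → IntegrableOn (h t) (Ico (t/2) t) := by
    intro t ht
    have hb : IntegrableOn
        (fun u : ℝ => Real.sqrt 2 * φ (t/2) * (t - u) ^ (-(1/2) : ℝ)) (Ico (t/2) t) :=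
      (hIntBd2 t ht).const_mul _
    refine Integrable.mono' hb
      ((hhm t).mono_measure (Measure.restrict_mono ?_ le_rfl)) ?_
    · intro u hu
      exact mem_Ioi.mpr (lt_of_lt_of_le (by linarith) hu.1)
    · filter_upwards [ae_restrict_mem measurableSet_Ico] with u hu
      rw [Real.norm_eq_abs, abs_of_nonneg (hnn t u (lt_of_lt_of_le (by linarith) hu.1))]
      exact hbd2 t ht u hu
  -- tail bound
  have htail_le : ∀ t : ℝ, 0 < t →
      (∫ u in Ico (t/2) t, h t u) ≤ 4 * Real.sqrt 2 * ∫ u in Ioc (t/4) (t/2), f u := by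
    intro t ht
    have hsh : (0:ℝ) < Real.sqrt (t/2) := Real.sqrt_pos.mpr (by linarith)
    have step1 : (∫ u in Ico (t/2) t, h t u)
        ≤ ∫ u in Ico (t/2) t, Real.sqrt 2 * φ (t/2) * (t - u) ^ (-(1/2) : ℝ) :=
      setIntegral_mono_on (hInt2 t ht) ((hIntBd2 t ht).const_mul _)
        measurableSet_Ico (hbd2 t ht)
    have hval : (∫ u in Ico (t/2) t, (t - u) ^ (-(1/2) : ℝ)) = 2 * Real.sqrt (t/2) := by
      rw [integral_Ico_eq_integral_Ioo, ← integral_Ioc_eq_integral_Ioo,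
        ← intervalIntegral.integral_of_le (by linarith : t/2 ≤ t),
        intervalIntegral.integral_comp_sub_left (fun x : ℝ => x ^ (-(1/2) : ℝ)) t]
      rw [show t - t = 0 by ring, show t - t/2 = t/2 by ring,
        integral_rpow (Or.inl (by norm_num)),
        show -(1/2 : ℝ) + 1 = 1/2 by norm_num,
        Real.zero_rpow (by norm_num : (1/2:ℝ) ≠ 0), ← Real.sqrt_eq_rpow]
      ring
    have step2 : (∫ u in Ico (t/2) t, Real.sqrt 2 * φ (t/2) * (t - u) ^ (-(1/2) : ℝ))
        = 2 * Real.sqrt 2 * (φ (t/2) * Real.sqrt (t/2)) := by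
      rw [integral_const_mul, hval]
      ring
    -- lower bound on the integral of f over (t/4, t/2]
    have hsub : Ioc (t/4) (t/2) ⊆ Ioi (0:ℝ) := fun u hu => lt_of_lt_of_le (by linarith) hu.1.le
    have hC : (φ (t/2) / Real.sqrt (t/2)) * (volume (Ioc (t/4) (t/2))).toReal
        ≤ ∫ u in Ioc (t/4) (t/2), f u := by
      refine setIntegral_ge_of_const_le_real measurableSet_Ioc (measure_Ioc_lt_top).ne ?_
        (hint.mono_set hsub)
      intro u hu
      have hu0 : (0:ℝ) < u := lt_of_lt_of_le (by linarith) hu.1.le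
      have hsu : (0:ℝ) < Real.sqrt u := Real.sqrt_pos.mpr hu0
      exact div_le_div₀ (hnonneg u hu0)
        (hanti (mem_Ioi.mpr hu0) (mem_Ioi.mpr (by linarith)) hu.2) hsu
        (Real.sqrt_le_sqrt hu.2)
    rw [Real.volume_Ioc, ENNReal.toReal_ofReal (by linarith), show t/2 - t/4 = t/4 by ring]
      at hC
    have hval2 : φ (t/2) * Real.sqrt (t/2) = 2 * (φ (t/2) / Real.sqrt (t/2) * (t/4)) := by
      rw [div_mul_eq_mul_div, mul_comm (2:ℝ), div_mul_eq_mul_div, eq_div_iff hsh.ne',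
        mul_assoc, Real.mul_self_sqrt (by linarith : (0:ℝ) ≤ t/2)]
      ring
    calc (∫ u in Ico (t/2) t, h t u)
        ≤ 2 * Real.sqrt 2 * (φ (t/2) * Real.sqrt (t/2)) := step1.trans_eq step2
      _ = 4 * Real.sqrt 2 * (φ (t/2) / Real.sqrt (t/2) * (t/4)) := by rw [hval2]; ring
      _ ≤ 4 * Real.sqrt 2 * ∫ u in Ioc (t/4) (t/2), f u := by
          exact mul_le_mul_of_nonneg_left hC (by positivity)
  -- the tail tends to zero
  have hIIc : ∀ c : ℝ, 0 ≤ c → IntervalIntegrable f volume 0 c := by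
    intro c hc
    rw [intervalIntegrable_iff_integrableOn_Ioc_of_le hc]
    exact hint.mono_set Ioc_subset_Ioi_self
  have hD : Tendsto (fun t : ℝ => ∫ u in Ioc (t/4) (t/2), f u) atTop (nhds 0) := by
    have h2 : Tendsto (fun t : ℝ => t/2) atTop atTop :=
      tendsto_id.atTop_div_const (by norm_num)
    have h4 : Tendsto (fun t : ℝ => t/4) atTop atTop :=
      tendsto_id.atTop_div_const (by norm_num)
    have hA := intervalIntegral_tendsto_integral_Ioi 0 hint h2
    have hB := intervalIntegral_tendsto_integral_Ioi 0 hint h4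
    have hAB := hA.sub hB
    rw [sub_self] at hAB
    refine hAB.congr' ?_
    filter_upwards [eventually_gt_atTop (0:ℝ)] with t ht
    rw [intervalIntegral.integral_interval_sub_left (hIIc (t/2) (by linarith))
      (hIIc (t/4) (by linarith)),
      intervalIntegral.integral_of_le (by linarith : t/4 ≤ t/2)]
  have htail0 : Tendsto (fun t : ℝ => ∫ u in Ico (t/2) t, h t u) atTop (nhds 0) := by
    have hmul : Tendsto (fun t : ℝ => 4 * Real.sqrt 2 * ∫ u in Ioc (t/4) (t/2), f u)
        atTop (nhds 0) := by
      have := hD.const_mul (4 * Real.sqrt 2)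
      rwa [mul_zero] at this
    refine squeeze_zero' ?_ ?_ hmul
    · filter_upwards [eventually_gt_atTop (0:ℝ)] with t ht
      exact setIntegral_nonneg measurableSet_Ico
        (fun u hu => hnn t u (lt_of_lt_of_le (by linarith) hu.1))
    · filter_upwards [eventually_gt_atTop (0:ℝ)] with t ht
      exact htail_le t ht
  -- the main part tends to the limit
  have hmain : Tendsto (fun t : ℝ => ∫ u in Ioo 0 (t/2), h t u) atTop
      (nhds (∫ u in Ioi 0, f u)) := by
    have key : Tendsto (fun t : ℝ => ∫ u in Ioi 0, (Ioo (0:ℝ) (t/2)).indicator (h t) u)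
        atTop (nhds (∫ u in Ioi 0, f u)) := by
      refine tendsto_integral_filter_of_dominated_convergence
        (fun u => Real.sqrt 2 * f u) ?_ ?_ (hint.const_mul _) ?_
      · filter_upwards with t
        exact (hhm t).indicator measurableSet_Ioo
      · filter_upwards [eventually_gt_atTop (0:ℝ)] with t ht
        filter_upwards [ae_restrict_mem measurableSet_Ioi] with u hu
        by_cases hmem : u ∈ Ioo (0:ℝ) (t/2)
        · rw [indicator_of_mem hmem, Real.norm_eq_abs, abs_of_nonneg (hnn t u hmem.1)]
          exact hbd1 t ht u hmem
        · rw [indicator_of_notMem hmem, norm_zero]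
          exact mul_nonneg (Real.sqrt_nonneg _)
            (div_nonneg (hnonneg u hu) (Real.sqrt_nonneg _))
      · filter_upwards [ae_restrict_mem measurableSet_Ioi] with u hu
        have hsu : (0:ℝ) < Real.sqrt u := Real.sqrt_pos.mpr hu
        -- pointwise convergence
        have hratio : Tendsto (fun t : ℝ => t / (t - u)) atTop (nhds 1) := by
          have h1 : Tendsto (fun t : ℝ => t - u) atTop atTop :=
            tendsto_atTop_add_const_right atTop (-u) tendsto_id
          have h2 : Tendsto (fun t : ℝ => (t - u)⁻¹) atTop (nhds 0) :=
            tendsto_inv_atTop_zero.comp h1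
          have h3 : Tendsto (fun t : ℝ => 1 + u * (t - u)⁻¹) atTop (nhds (1 + u * 0)) :=
            tendsto_const_nhds.add (h2.const_mul u)
          rw [mul_zero, add_zero] at h3
          refine h3.congr' ?_
          filter_upwards [eventually_gt_atTop u] with t ht
          have : t - u ≠ 0 := sub_ne_zero_of_ne ht.ne'
          field_simp
          ring
        have hsq : Tendsto (fun t : ℝ => Real.sqrt t / Real.sqrt (t - u)) atTop (nhds 1) := by
          have h5 : Tendsto (fun t : ℝ => Real.sqrt (t / (t - u))) atTop (nhds 1) := by
            have := (Real.continuous_sqrt.tendsto 1).comp hratio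
            rwa [Real.sqrt_one] at this
          refine h5.congr' ?_
          filter_upwards [eventually_ge_atTop (0:ℝ)] with t ht
          exact Real.sqrt_div ht _
        have hlim : Tendsto (fun t : ℝ => h t u) atTop (nhds (f u)) := by
          have h6 : Tendsto (fun t : ℝ => f u * (Real.sqrt t / Real.sqrt (t - u)))
              atTop (nhds (f u * 1)) := hsq.const_mul _
          rw [mul_one] at h6
          refine h6.congr ?_
          intro t
          rw [hh, hf]
          simp only
          rw [Real.sqrt_mul hu.le]
          ring
        refine hlim.congr' ?_
        filter_upwards [eventually_gt_atTop (2 * u)] with t ht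
        rw [indicator_of_mem (by constructor <;> [exact hu; linarith] : u ∈ Ioo (0:ℝ) (t/2))]
    refine key.congr ?_
    intro t
    rw [setIntegral_indicator measurableSet_Ioo,
      inter_eq_self_of_subset_right Ioo_subset_Ioi_self]
  -- assemble
  have hsum := hmain.add htail0
  rw [add_zero] at hsum
  refine hsum.congr' ?_
  filter_upwards [eventually_gt_atTop (0:ℝ)] with t ht
  have hunion : Ioo (0:ℝ) (t/2) ∪ Ico (t/2) t = Ioo 0 t :=
    Ioo_union_Ico_eq_Ioo (by linarith) (by linarith)
  have hdisj : Disjoint (Ioo (0:ℝ) (t/2)) (Ico (t/2) t) :=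
    Set.disjoint_left.mpr fun u h1 h2 => absurd h2.1 (not_le.mpr h1.2)
  rw [← setIntegral_union hdisj measurableSet_Ico (hInt1 t ht) (hInt2 t ht), hunion,
    ← integral_const_mul]
end

section
/- Let φ be a non-negative non-increasing function on (0,∞), not Lebesgue-a.e. equal to zero, with ∫₀^∞ φ(u) u^{-1/2} du < ∞ and with φ(0+) = lim_{u→0+} φ(u) finite. Then there exist constants 0 < c₀ ≤ C₀ < ∞ such that for every Borel measurable f : (0,∞) → ℝ one has (with all integrals taken in [0,∞]): c₀ ∫₀^∞ |f(s)| (1+√s)^{-1} ds ≤ ∫₀^∞ φ(u) u^{-1/2} (∫₀^∞ |f(s+u)| s^{-1/2} ds) du ≤ C₀ ∫₀^∞ |f(s)| (1+√s)^{-1} ds. -/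
open MeasureTheory Filter Set

open scoped ENNReal

lemma wsa_sqrt_int (c d : ℝ) (hc : 0 ≤ c) (hcd : c ≤ d) :
    ∫⁻ u in Ioo c d, ENNReal.ofReal ((Real.sqrt u)⁻¹) =
      ENNReal.ofReal (2 * Real.sqrt d - 2 * Real.sqrt c) := by
  have h1 : ∫⁻ u in Ioo c d, ENNReal.ofReal ((Real.sqrt u)⁻¹)
      = ∫⁻ u in Ioo c d, ENNReal.ofReal (u ^ (-(1/2) : ℝ)) := by
    refine setLIntegral_congr_fun measurableSet_Ioo ?_
    intro u hu
    dsimp only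
    rw [Real.rpow_neg (le_of_lt (lt_of_le_of_lt hc hu.1)), Real.sqrt_eq_rpow]
  have hInt : IntegrableOn (fun u : ℝ => u ^ (-(1/2) : ℝ)) (Ioo c d) := by
    have := (intervalIntegral.intervalIntegrable_rpow' (a := c) (b := d)
      (by norm_num : (-1:ℝ) < -(1/2))).1
    exact (this.mono_set Ioo_subset_Ioc_self)
  have hpos : 0 ≤ᵐ[volume.restrict (Ioo c d)] fun u : ℝ => u ^ (-(1/2) : ℝ) := by
    filter_upwards [ae_restrict_mem measurableSet_Ioo] with u hu
    exact Real.rpow_nonneg (le_trans hc hu.1.le) _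
  rw [h1, ← ofReal_integral_eq_lintegral_ofReal hInt hpos]
  congr 1
  rw [← integral_Ioc_eq_integral_Ioo, ← intervalIntegral.integral_of_le hcd,
    integral_rpow (Or.inl (by norm_num))]
  have hd : d ^ (-(1/2) + 1 : ℝ) = Real.sqrt d := by
    rw [Real.sqrt_eq_rpow]; norm_num
  have hcc : c ^ (-(1/2) + 1 : ℝ) = Real.sqrt c := by
    rw [Real.sqrt_eq_rpow]; norm_num
  rw [hd, hcc]; ring

lemma wsa_shift (g : ℝ → ℝ≥0∞) (u : ℝ) :
    ∫⁻ s in Ioi (0:ℝ), g (s + u) = ∫⁻ t in Ioi u, g t := by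
  have h := (measurePreserving_add_right (volume : Measure ℝ) u).setLIntegral_comp_preimage_emb
    (MeasurableEquiv.addRight u).measurableEmbedding g (Ioi u)
  simpa using h

lemma wsa_reflect (g : ℝ → ℝ≥0∞) (t c d : ℝ) :
    ∫⁻ u in Ioo c d, g (t - u) = ∫⁻ v in Ioo (t - d) (t - c), g v := by
  have h := (Measure.measurePreserving_sub_left (volume : Measure ℝ) t).setLIntegral_comp_preimage_emb
    (MeasurableEquiv.subLeft t).measurableEmbedding g (Ioo (t - d) (t - c))
  have hpre : (fun u => t - u) ⁻¹' Ioo (t - d) (t - c) = Ioo c d := by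
    ext x; simp only [mem_preimage, mem_Ioo]
    constructor <;> rintro ⟨h1, h2⟩ <;> constructor <;> linarith
  simpa [hpre] using h

noncomputable def wsaK (φ : ℝ → ℝ) (t : ℝ) : ℝ≥0∞ :=
  ∫⁻ u in Ioo 0 t, ENNReal.ofReal (φ u / Real.sqrt u) * ENNReal.ofReal ((Real.sqrt (t - u))⁻¹)

lemma wsa_lower (φ : ℝ → ℝ) (hanti : AntitoneOn φ (Ioi 0)) {a : ℝ} (ha : 0 < a)
    (hδ : 0 ≤ φ a) {t : ℝ} (ht : 0 < t) :
    ENNReal.ofReal (φ a * min 1 (Real.sqrt a) / (1 + Real.sqrt t)) ≤ wsaK φ t := by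
  set δ := φ a with hδdef
  set m := min t a with hm
  have hm0 : 0 < m := lt_min ht ha
  have hmt : m ≤ t := min_le_left _ _
  have hma : m ≤ a := min_le_right _ _
  have hst : 0 < Real.sqrt t := Real.sqrt_pos.2 ht
  have key : ∫⁻ u in Ioo 0 m, ENNReal.ofReal ((δ * (Real.sqrt t)⁻¹) * (Real.sqrt u)⁻¹)
      ≤ wsaK φ t := by
    refine le_trans ?_
      (lintegral_mono' (Measure.restrict_mono (Ioo_subset_Ioo_right hmt) le_rfl) le_rfl)
    refine lintegral_mono_ae ?_
    filter_upwards [ae_restrict_mem measurableSet_Ioo] with u hu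
    have hu0 : 0 < u := hu.1
    have hsu : 0 < Real.sqrt u := Real.sqrt_pos.2 hu0
    have htu : 0 < t - u := by have := lt_of_lt_of_le hu.2 hmt; linarith
    have h1 : δ ≤ φ u := hanti (mem_Ioi.2 hu0) (mem_Ioi.2 ha) (le_trans (le_of_lt hu.2) hma)
    have hφu : 0 ≤ φ u := le_trans hδ h1
    have h2 : (Real.sqrt t)⁻¹ ≤ (Real.sqrt (t - u))⁻¹ := by
      apply inv_anti₀ (Real.sqrt_pos.2 htu)
      exact Real.sqrt_le_sqrt (by linarith)
    calc ENNReal.ofReal ((δ * (Real.sqrt t)⁻¹) * (Real.sqrt u)⁻¹)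
        ≤ ENNReal.ofReal ((φ u / Real.sqrt u) * (Real.sqrt (t-u))⁻¹) := by
          apply ENNReal.ofReal_le_ofReal
          rw [div_eq_mul_inv]
          calc δ * (Real.sqrt t)⁻¹ * (Real.sqrt u)⁻¹
              = (δ * (Real.sqrt u)⁻¹) * (Real.sqrt t)⁻¹ := by ring
            _ ≤ (φ u * (Real.sqrt u)⁻¹) * (Real.sqrt (t-u))⁻¹ := by
                apply mul_le_mul (mul_le_mul_of_nonneg_right h1 (by positivity)) h2
                  (by positivity) (by positivity)
      _ = ENNReal.ofReal (φ u / Real.sqrt u) * ENNReal.ofReal ((Real.sqrt (t-u))⁻¹) :=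
          ENNReal.ofReal_mul (div_nonneg hφu hsu.le)
  have hcalc : ∫⁻ u in Ioo 0 m, ENNReal.ofReal ((δ * (Real.sqrt t)⁻¹) * (Real.sqrt u)⁻¹)
      = ENNReal.ofReal ((δ * (Real.sqrt t)⁻¹) * (2 * Real.sqrt m)) := by
    have hsplit : ∀ u : ℝ, ENNReal.ofReal ((δ * (Real.sqrt t)⁻¹) * (Real.sqrt u)⁻¹)
        = ENNReal.ofReal (δ * (Real.sqrt t)⁻¹) * ENNReal.ofReal ((Real.sqrt u)⁻¹) :=
      fun u => ENNReal.ofReal_mul (by positivity)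
    simp_rw [hsplit]
    rw [lintegral_const_mul' _ _ ENNReal.ofReal_ne_top, wsa_sqrt_int 0 m le_rfl hm0.le,
      ← ENNReal.ofReal_mul (by positivity)]
    norm_num
  rw [hcalc] at key
  refine le_trans ?_ key
  apply ENNReal.ofReal_le_ofReal
  rw [div_le_iff₀ (by positivity)]
  have hmin0 : 0 ≤ min 1 (Real.sqrt a) := le_min zero_le_one (Real.sqrt_nonneg a)
  rcases le_total t a with h | h
  · have hmm : m = t := min_eq_left h
    have hmin : min 1 (Real.sqrt a) ≤ 1 := min_le_left _ _
    rw [hmm]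
    have e : δ * (Real.sqrt t)⁻¹ * (2 * Real.sqrt t) * (1 + Real.sqrt t)
        = 2 * δ * (1 + Real.sqrt t) := by
      field_simp
    rw [e]
    nlinarith [hst.le, hδ]
  · have hmm : m = a := min_eq_right h
    have hmin : min 1 (Real.sqrt a) ≤ Real.sqrt a := min_le_right _ _
    rw [hmm]
    have e : δ * (Real.sqrt t)⁻¹ * (2 * Real.sqrt a) * (1 + Real.sqrt t)
        = 2 * δ * Real.sqrt a * (Real.sqrt t)⁻¹ + 2 * δ * Real.sqrt a := by
      field_simp
    rw [e]
    nlinarith [Real.sqrt_nonneg a, hδ,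
      mul_nonneg (mul_nonneg hδ (Real.sqrt_nonneg a)) (inv_nonneg.2 hst.le)]

set_option maxHeartbeats 1000000 in
lemma wsa_upper (φ : ℝ → ℝ) (hnonneg : ∀ u, 0 < u → 0 ≤ φ u) (hanti : AntitoneOn φ (Ioi 0))
    {L A : ℝ} (hL0 : 0 ≤ L) (hA0 : 0 ≤ A)
    (hφle : ∀ u, 0 < u → φ u ≤ L)
    (hAb : ∀ s : Set ℝ, s ⊆ Ioi 0 →
      (∫⁻ u in s, ENNReal.ofReal (φ u / Real.sqrt u)) ≤ ENNReal.ofReal A)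
    {t : ℝ} (ht : 0 < t) :
    wsaK φ t ≤ ENNReal.ofReal ((8*L + 16*A + 1) / (1 + Real.sqrt t)) := by
  have ht2 : 0 < t/2 := by linarith
  have hs2 : 0 < Real.sqrt (t/2) := Real.sqrt_pos.2 ht2
  have hst : 0 < Real.sqrt t := Real.sqrt_pos.2 ht
  have hφ2 : 0 ≤ φ (t/2) := hnonneg _ ht2
  set W : ℝ → ℝ≥0∞ :=
    fun u => ENNReal.ofReal (φ u / Real.sqrt u) * ENNReal.ofReal ((Real.sqrt (t - u))⁻¹) with hW
  have hdisj : Disjoint (Ioc 0 (t/2)) (Ioo (t/2) t) := by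
    rw [Set.disjoint_left]
    rintro x ⟨_, h2⟩ ⟨h3, _⟩
    exact absurd h2 (not_le.2 h3)
  have hsplit : wsaK φ t = (∫⁻ u in Ioc 0 (t/2), W u) + (∫⁻ u in Ioo (t/2) t, W u) := by
    rw [wsaK, ← Ioc_union_Ioo_eq_Ioo (le_of_lt ht2) (by linarith : t/2 < t),
      lintegral_union measurableSet_Ioo hdisj]
  -- the reflected sqrt integral over (t/2, t)
  have hrefl : ∫⁻ u in Ioo (t/2) t, ENNReal.ofReal ((Real.sqrt (t - u))⁻¹)
      = ENNReal.ofReal (2 * Real.sqrt (t/2)) := by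
    rw [wsa_reflect (fun v => ENNReal.ofReal ((Real.sqrt v)⁻¹)) t (t/2) t]
    have e1 : t - t = 0 := by ring
    have e2 : t - t/2 = t/2 := by ring
    rw [e1, e2, wsa_sqrt_int 0 (t/2) le_rfl ht2.le]
    norm_num
  -- P2 bound
  have hP2 : (∫⁻ u in Ioo (t/2) t, W u) ≤ ENNReal.ofReal (2 * φ (t/2)) := by
    have step1 : (∫⁻ u in Ioo (t/2) t, W u)
        ≤ ∫⁻ u in Ioo (t/2) t, ENNReal.ofReal (φ (t/2) * (Real.sqrt (t/2))⁻¹) *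
            ENNReal.ofReal ((Real.sqrt (t - u))⁻¹) := by
      refine lintegral_mono_ae ?_
      filter_upwards [ae_restrict_mem measurableSet_Ioo] with u hu
      refine mul_le_mul_left (ENNReal.ofReal_le_ofReal ?_) _
      have hu0 : 0 < u := lt_trans ht2 hu.1
      rw [div_eq_mul_inv]
      refine mul_le_mul (hanti (mem_Ioi.2 ht2) (mem_Ioi.2 hu0) hu.1.le)
        (inv_anti₀ hs2 (Real.sqrt_le_sqrt hu.1.le)) (by positivity) hφ2
    refine le_trans step1 ?_
    rw [lintegral_const_mul' _ _ ENNReal.ofReal_ne_top, hrefl,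
      ← ENNReal.ofReal_mul (by positivity)]
    apply ENNReal.ofReal_le_ofReal
    have e : φ (t/2) * (Real.sqrt (t/2))⁻¹ * (2 * Real.sqrt (t/2)) = 2 * φ (t/2) := by
      field_simp
    rw [e]
  rcases le_total t 1 with hcase | hcase
  · -- small t : use φ ≤ L
    have hP1 : (∫⁻ u in Ioc 0 (t/2), W u) ≤ ENNReal.ofReal (2 * L) := by
      have step1 : (∫⁻ u in Ioc 0 (t/2), W u)
          ≤ ∫⁻ u in Ioc 0 (t/2), ENNReal.ofReal (L * (Real.sqrt (t/2))⁻¹) *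
              ENNReal.ofReal ((Real.sqrt u)⁻¹) := by
        refine lintegral_mono_ae ?_
        filter_upwards [ae_restrict_mem measurableSet_Ioc] with u hu
        have hu0 : 0 < u := hu.1
        have hsu : 0 < Real.sqrt u := Real.sqrt_pos.2 hu0
        have htu2 : t/2 ≤ t - u := by linarith [hu.2]
        calc ENNReal.ofReal (φ u / Real.sqrt u) * ENNReal.ofReal ((Real.sqrt (t - u))⁻¹)
            = ENNReal.ofReal ((φ u / Real.sqrt u) * (Real.sqrt (t - u))⁻¹) :=
              (ENNReal.ofReal_mul (div_nonneg (hnonneg u hu0) hsu.le)).symm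
          _ ≤ ENNReal.ofReal ((L * (Real.sqrt (t/2))⁻¹) * (Real.sqrt u)⁻¹) := by
              apply ENNReal.ofReal_le_ofReal
              rw [div_eq_mul_inv]
              have h1 : φ u * (Real.sqrt u)⁻¹ ≤ L * (Real.sqrt u)⁻¹ :=
                mul_le_mul_of_nonneg_right (hφle u hu0) (by positivity)
              have h2 : (Real.sqrt (t - u))⁻¹ ≤ (Real.sqrt (t/2))⁻¹ :=
                inv_anti₀ hs2 (Real.sqrt_le_sqrt htu2)
              calc φ u * (Real.sqrt u)⁻¹ * (Real.sqrt (t - u))⁻¹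
                  ≤ (L * (Real.sqrt u)⁻¹) * (Real.sqrt (t/2))⁻¹ := by
                    apply mul_le_mul h1 h2 (by positivity)
                      (mul_nonneg hL0 (by positivity))
                _ = (L * (Real.sqrt (t/2))⁻¹) * (Real.sqrt u)⁻¹ := by ring
          _ = ENNReal.ofReal (L * (Real.sqrt (t/2))⁻¹) * ENNReal.ofReal ((Real.sqrt u)⁻¹) :=
              ENNReal.ofReal_mul (by positivity)
      refine le_trans step1 ?_
      rw [lintegral_const_mul' _ _ ENNReal.ofReal_ne_top,
        setLIntegral_congr (Ioo_ae_eq_Ioc (a := (0:ℝ)) (b := t/2)).symm,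
        wsa_sqrt_int 0 (t/2) le_rfl ht2.le, ← ENNReal.ofReal_mul (by positivity)]
      apply ENNReal.ofReal_le_ofReal
      have e : L * (Real.sqrt (t/2))⁻¹ * (2 * Real.sqrt (t/2) - 2 * Real.sqrt 0) = 2 * L := by
        rw [Real.sqrt_zero]; field_simp; ring
      rw [e]
    rw [hsplit]
    calc (∫⁻ u in Ioc 0 (t/2), W u) + (∫⁻ u in Ioo (t/2) t, W u)
        ≤ ENNReal.ofReal (2 * L) + ENNReal.ofReal (2 * L) := by
          refine add_le_add hP1 (le_trans hP2 (ENNReal.ofReal_le_ofReal ?_))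
          nlinarith [hφle _ ht2]
      _ = ENNReal.ofReal (4 * L) := by
          rw [← ENNReal.ofReal_add (by positivity) (by positivity)]; congr 1; ring
      _ ≤ ENNReal.ofReal ((8*L + 16*A + 1) / (1 + Real.sqrt t)) := by
          apply ENNReal.ofReal_le_ofReal
          rw [le_div_iff₀ (by positivity)]
          have hsle1 : Real.sqrt t ≤ 1 := by
            rw [show (1:ℝ) = Real.sqrt 1 by simp]
            exact Real.sqrt_le_sqrt hcase
          nlinarith [hL0, hA0, Real.sqrt_nonneg t]
  · -- large t
    have hs1 : 1 ≤ Real.sqrt t := by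
      rw [show (1:ℝ) = Real.sqrt 1 by simp]
      exact Real.sqrt_le_sqrt hcase
    have hP1 : (∫⁻ u in Ioc 0 (t/2), W u) ≤ ENNReal.ofReal ((Real.sqrt (t/2))⁻¹ * A) := by
      have step1 : (∫⁻ u in Ioc 0 (t/2), W u)
          ≤ ∫⁻ u in Ioc 0 (t/2), ENNReal.ofReal ((Real.sqrt (t/2))⁻¹) *
              ENNReal.ofReal (φ u / Real.sqrt u) := by
        refine lintegral_mono_ae ?_
        filter_upwards [ae_restrict_mem measurableSet_Ioc] with u hu
        have htu2 : t/2 ≤ t - u := by linarith [hu.2]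
        rw [mul_comm (ENNReal.ofReal ((Real.sqrt (t/2))⁻¹))]
        exact mul_le_mul_right (ENNReal.ofReal_le_ofReal
          (inv_anti₀ hs2 (Real.sqrt_le_sqrt htu2))) _
      refine le_trans step1 ?_
      rw [lintegral_const_mul' _ _ ENNReal.ofReal_ne_top,
        ENNReal.ofReal_mul (by positivity : (0:ℝ) ≤ (Real.sqrt (t/2))⁻¹)]
      exact mul_le_mul_right (hAb (Ioc 0 (t/2)) (fun x hx => mem_Ioi.2 hx.1)) _
    -- bound on φ (t/2) from integrability
    have e2 : Real.sqrt (t/2) = Real.sqrt t / Real.sqrt 2 := Real.sqrt_div ht.le 2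
    have hsqrt4 : Real.sqrt 4 = 2 := by
      rw [show (4:ℝ) = 2^2 by norm_num, Real.sqrt_sq (by norm_num : (0:ℝ) ≤ 2)]
    have e4 : Real.sqrt (t/4) = Real.sqrt t / 2 := by
      rw [Real.sqrt_div ht.le 4, hsqrt4]
    have hs2' : 0 < Real.sqrt 2 := Real.sqrt_pos.2 (by norm_num)
    have h2mul : Real.sqrt 2 * Real.sqrt 2 = 2 := Real.mul_self_sqrt (by norm_num)
    have hφt2A : φ (t/2) * (Real.sqrt t * (Real.sqrt 2 - 1)) ≤ A := by
      have h1 : ∫⁻ u in Ioo (t/4) (t/2), ENNReal.ofReal (φ (t/2) * (Real.sqrt u)⁻¹)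
          ≤ ENNReal.ofReal A := by
        refine le_trans (lintegral_mono_ae ?_)
          (hAb (Ioo (t/4) (t/2)) (fun x hx => mem_Ioi.2 (lt_trans (by linarith) hx.1)))
        filter_upwards [ae_restrict_mem measurableSet_Ioo] with u hu
        apply ENNReal.ofReal_le_ofReal
        have hu0 : 0 < u := lt_trans (by linarith) hu.1
        rw [div_eq_mul_inv]
        exact mul_le_mul_of_nonneg_right
          (hanti (mem_Ioi.2 hu0) (mem_Ioi.2 ht2) hu.2.le) (by positivity)
      have h2 : ∫⁻ u in Ioo (t/4) (t/2), ENNReal.ofReal (φ (t/2) * (Real.sqrt u)⁻¹)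
          = ENNReal.ofReal (φ (t/2) * (2 * Real.sqrt (t/2) - 2 * Real.sqrt (t/4))) := by
        have hsplit2 : ∀ u : ℝ, ENNReal.ofReal (φ (t/2) * (Real.sqrt u)⁻¹)
            = ENNReal.ofReal (φ (t/2)) * ENNReal.ofReal ((Real.sqrt u)⁻¹) :=
          fun u => ENNReal.ofReal_mul hφ2
        simp_rw [hsplit2]
        rw [lintegral_const_mul' _ _ ENNReal.ofReal_ne_top,
          wsa_sqrt_int (t/4) (t/2) (by linarith) (by linarith),
          ← ENNReal.ofReal_mul hφ2]
      rw [h2] at h1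
      have h3 : φ (t/2) * (2 * Real.sqrt (t/2) - 2 * Real.sqrt (t/4)) ≤ A :=
        (ENNReal.ofReal_le_ofReal_iff hA0).1 h1
      have e : φ (t/2) * (2 * Real.sqrt (t/2) - 2 * Real.sqrt (t/4))
          = φ (t/2) * (Real.sqrt t * (Real.sqrt 2 - 1)) := by
        rw [e2, e4]
        field_simp
        linear_combination (-1) * φ (t/2) * h2mul
      rw [e] at h3
      exact h3
    -- combine
    rw [hsplit]
    calc (∫⁻ u in Ioc 0 (t/2), W u) + (∫⁻ u in Ioo (t/2) t, W u)
        ≤ ENNReal.ofReal ((Real.sqrt (t/2))⁻¹ * A) + ENNReal.ofReal (2 * φ (t/2)) :=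
          add_le_add hP1 hP2
      _ = ENNReal.ofReal ((Real.sqrt (t/2))⁻¹ * A + 2 * φ (t/2)) := by
          rw [← ENNReal.ofReal_add (by positivity) (by positivity)]
      _ ≤ ENNReal.ofReal ((8*L + 16*A + 1) / (1 + Real.sqrt t)) := by
          apply ENNReal.ofReal_le_ofReal
          rw [le_div_iff₀ (by positivity)]
          set s := Real.sqrt t with hsdef
          set s2 := Real.sqrt 2 with hs2def
          have hinv : (Real.sqrt (t/2))⁻¹ = s2 / s := by
            rw [e2, inv_div]
          rw [hinv]
          have hs2a : s2 ≤ 3/2 := by nlinarith [h2mul, hs2'.le]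
          have hs2b : 1 ≤ s2 := by nlinarith [h2mul, hs2'.le]
          have e1 : s2 / s * A * (1 + s) ≤ 2 * (s2 * A) := by
            rw [div_mul_eq_mul_div, div_mul_eq_mul_div, div_le_iff₀ (by positivity)]
            nlinarith [mul_nonneg (mul_nonneg hs2'.le hA0) (sub_nonneg.2 hs1)]
          have e3 : φ (t/2) * s ≤ A * (s2 + 1) := by
            have key := mul_le_mul_of_nonneg_right hφt2A (by positivity : (0:ℝ) ≤ s2 + 1)
            have eq1 : φ (t/2) * (s * (s2 - 1)) * (s2 + 1)
                = φ (t/2) * s * (s2*s2) - φ (t/2) * s := by ring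
            rw [eq1, h2mul] at key
            linarith
          have e2' : 2 * φ (t/2) * (1 + s) ≤ 4 * (φ (t/2) * s) := by nlinarith [hφ2, hs1]
          nlinarith [e1, e2', e3, hA0, hL0, mul_le_mul_of_nonneg_left hs2a hA0,
            mul_nonneg hφ2 hst.le]


set_option maxHeartbeats 1000000

/-- for `φ ≥ 0` non-increasing on `(0,∞)`, not a.e. zero, with
`∫₀^∞ φ(u) u^{-1/2} du < ∞` and finite right limit `φ(0+)`, there are constants
`0 < c₀ ≤ C₀ < ∞` with
`c₀ ∫₀^∞ |f(s)|/(1+√s) ds ≤ ∫₀^∞ φ(u) u^{-1/2} (∫₀^∞ |f(s+u)| s^{-1/2} ds) du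
  ≤ C₀ ∫₀^∞ |f(s)|/(1+√s) ds`
for every Borel `f`, all integrals being taken in `[0,∞]`. -/
theorem exists_const_norm_equiv_weighted_shift
    (φ : ℝ → ℝ) (hnonneg : ∀ u, 0 < u → 0 ≤ φ u) (hanti : AntitoneOn φ (Ioi 0))
    (hint : IntegrableOn (fun u => φ u / Real.sqrt u) (Ioi 0))
    (hlim : ∃ L : ℝ, Tendsto φ (nhdsWithin 0 (Ioi 0)) (nhds L))
    (hne : ¬ (∀ᵐ u ∂(volume.restrict (Ioi 0)), φ u = 0)) :
    ∃ c₀ C₀ : ℝ, 0 < c₀ ∧ c₀ ≤ C₀ ∧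
      ∀ f : ℝ → ℝ, Measurable f →
        ENNReal.ofReal c₀ * ∫⁻ s in Ioi 0, ENNReal.ofReal (|f s| / (1 + Real.sqrt s)) ≤
          (∫⁻ u in Ioi 0, ENNReal.ofReal (φ u / Real.sqrt u) *
            ∫⁻ s in Ioi 0, ENNReal.ofReal (|f (s + u)| / Real.sqrt s)) ∧
        (∫⁻ u in Ioi 0, ENNReal.ofReal (φ u / Real.sqrt u) *
            ∫⁻ s in Ioi 0, ENNReal.ofReal (|f (s + u)| / Real.sqrt s)) ≤
          ENNReal.ofReal C₀ * ∫⁻ s in Ioi 0, ENNReal.ofReal (|f s| / (1 + Real.sqrt s)) := by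
  obtain ⟨L', hL'⟩ := hlim
  have hφle : ∀ u, 0 < u → φ u ≤ L' := by
    intro u hu
    refine ge_of_tendsto hL' ?_
    filter_upwards [Ioo_mem_nhdsGT_of_mem (show (0:ℝ) ∈ Ico 0 u from ⟨le_refl 0, hu⟩)] with v hv
    exact hanti (mem_Ioi.2 hv.1) (mem_Ioi.2 hu) hv.2.le
  have hL0 : 0 ≤ L' := by
    refine ge_of_tendsto hL' ?_
    filter_upwards [self_mem_nhdsWithin] with v hv
    exact hnonneg v hv
  have hex : ∃ a, 0 < a ∧ 0 < φ a := by
    by_contra hc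
    push_neg at hc
    apply hne
    filter_upwards [ae_restrict_mem measurableSet_Ioi] with u hu
    exact le_antisymm (hc u hu) (hnonneg u hu)
  obtain ⟨a, ha, hδ⟩ := hex
  set Atop : ℝ≥0∞ := ∫⁻ u in Ioi 0, ENNReal.ofReal (φ u / Real.sqrt u) with hAtopdef
  have hAtop : Atop ≠ ⊤ := by
    have h1 : Atop ≤ ∫⁻ u in Ioi 0, (‖φ u / Real.sqrt u‖₊ : ℝ≥0∞) :=
      lintegral_mono fun u => Real.ofReal_le_enorm _
    exact ne_top_of_le_ne_top hint.2.ne h1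
  set A := Atop.toReal with hAdef
  have hA0 : 0 ≤ A := ENNReal.toReal_nonneg
  have hAb : ∀ s : Set ℝ, s ⊆ Ioi 0 →
      (∫⁻ u in s, ENNReal.ofReal (φ u / Real.sqrt u)) ≤ ENNReal.ofReal A := by
    intro s hs
    rw [hAdef, ENNReal.ofReal_toReal hAtop]
    exact lintegral_mono' (Measure.restrict_mono hs le_rfl) le_rfl
  set c₀ := φ a * min 1 (Real.sqrt a) with hc₀
  set C₁ := 8*L' + 16*A + 1 with hC₁
  have hc₀pos : 0 < c₀ := mul_pos hδ (lt_min one_pos (Real.sqrt_pos.2 ha))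
  refine ⟨c₀, max c₀ C₁, hc₀pos, le_max_left _ _, ?_⟩
  intro f hf
  set g : ℝ → ℝ≥0∞ := fun t => ENNReal.ofReal |f t| with hg
  have hgm : Measurable g := (continuous_abs.measurable.comp hf).ennreal_ofReal
  set sq : ℝ → ℝ≥0∞ := fun x => ENNReal.ofReal ((Real.sqrt x)⁻¹) with hsq
  have hsqm : Measurable sq := (Real.continuous_sqrt.measurable.inv).ennreal_ofReal
  have inner_eq : ∀ u : ℝ, (∫⁻ s in Ioi 0, ENNReal.ofReal (|f (s + u)| / Real.sqrt s))
      = ∫⁻ t in Ioi u, g t * sq (t - u) := by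
    intro u
    have h1 : (∫⁻ s in Ioi 0, ENNReal.ofReal (|f (s + u)| / Real.sqrt s))
        = ∫⁻ s in Ioi 0, (fun t => g t * sq (t - u)) (s + u) := by
      apply lintegral_congr
      intro s
      simp only [hg, hsq, add_sub_cancel_right]
      rw [div_eq_mul_inv, ENNReal.ofReal_mul (abs_nonneg _)]
    rw [h1]
    exact wsa_shift (fun t => g t * sq (t - u)) u
  have hwae : AEMeasurable (fun u => ENNReal.ofReal (φ u / Real.sqrt u))
      (volume.restrict (Ioi 0)) := hint.1.aemeasurable.ennreal_ofReal
  set ψ := hwae.mk _ with hψdef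
  have hψm : Measurable ψ := hwae.measurable_mk
  have hψeq : (fun u => ENNReal.ofReal (φ u / Real.sqrt u)) =ᵐ[volume.restrict (Ioi 0)] ψ :=
    hwae.ae_eq_mk
  set I := ∫⁻ u in Ioi 0, ENNReal.ofReal (φ u / Real.sqrt u) *
      ∫⁻ s in Ioi 0, ENNReal.ofReal (|f (s + u)| / Real.sqrt s) with hI
  have hI1 : I = ∫⁻ u in Ioi 0, ψ u * ∫⁻ t in Ioi u, g t * sq (t - u) := by
    rw [hI]
    refine lintegral_congr_ae ?_
    filter_upwards [hψeq] with u hu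
    rw [inner_eq u, hu]
  set F : ℝ × ℝ → ℝ≥0∞ :=
    fun p => Set.indicator {q : ℝ × ℝ | q.1 < q.2}
      (fun q => ψ q.1 * (g q.2 * sq (q.2 - q.1))) p with hF
  have hFm : Measurable F := by
    apply Measurable.indicator
    · exact (hψm.comp measurable_fst).mul ((hgm.comp measurable_snd).mul
        (hsqm.comp (measurable_snd.sub measurable_fst)))
    · exact measurableSet_lt measurable_fst measurable_snd
  have claim1 : ∀ u ∈ Ioi (0:ℝ), ψ u * (∫⁻ t in Ioi u, g t * sq (t - u))
      = ∫⁻ t in Ioi 0, F (u, t) := by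
    intro u hu
    have hind : ∀ t : ℝ, F (u, t)
        = (Ioi u).indicator (fun t => ψ u * (g t * sq (t - u))) t := by
      intro t
      simp only [hF, Set.indicator_apply, mem_setOf_eq, mem_Ioi]
    simp_rw [hind]
    rw [setLIntegral_indicator measurableSet_Ioi,
      inter_eq_self_of_subset_left (Ioi_subset_Ioi (le_of_lt hu)),
      lintegral_const_mul _ (show Measurable fun t : ℝ => g t * sq (t - u) from
        hgm.mul (hsqm.comp (measurable_id.sub measurable_const)))]
  have claim2 : ∀ t ∈ Ioi (0:ℝ), (∫⁻ u in Ioi 0, F (u, t))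
      = g t * ∫⁻ u in Ioo 0 t, ψ u * sq (t - u) := by
    intro t ht
    have hind : ∀ u : ℝ, F (u, t)
        = (Iio t).indicator (fun u => ψ u * (g t * sq (t - u))) u := by
      intro u
      simp only [hF, Set.indicator_apply, mem_setOf_eq, mem_Iio]
    simp_rw [hind]
    rw [setLIntegral_indicator measurableSet_Iio]
    have hset : Iio t ∩ Ioi 0 = Ioo 0 t := by
      ext x; simp [mem_Ioo, and_comm]
    rw [hset,
      ← lintegral_const_mul _ (show Measurable fun u : ℝ => ψ u * sq (t - u) from
        hψm.mul (hsqm.comp (measurable_const.sub measurable_id)))]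
    apply lintegral_congr
    intro u
    ring
  have claim3 : ∀ t : ℝ, (∫⁻ u in Ioo 0 t, ψ u * sq (t - u)) = wsaK φ t := by
    intro t
    refine lintegral_congr_ae ?_
    have h := ae_restrict_of_ae_restrict_of_subset (Ioo_subset_Ioi_self : Ioo (0:ℝ) t ⊆ Ioi 0) hψeq
    filter_upwards [h] with u hu
    rw [← hu]
  have hswap : (∫⁻ u in Ioi (0:ℝ), ∫⁻ t in Ioi (0:ℝ), F (u, t))
      = ∫⁻ t in Ioi (0:ℝ), ∫⁻ u in Ioi (0:ℝ), F (u, t) :=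
    lintegral_lintegral_swap (hFm.aemeasurable)
  have hI2 : I = ∫⁻ t in Ioi 0, g t * wsaK φ t := by
    rw [hI1, setLIntegral_congr_fun measurableSet_Ioi claim1, hswap,
      setLIntegral_congr_fun measurableSet_Ioi claim2]
    apply lintegral_congr
    intro t
    rw [claim3]
  constructor
  · rw [hI2, ← lintegral_const_mul' _ _ ENNReal.ofReal_ne_top]
    refine lintegral_mono_ae ?_
    filter_upwards [ae_restrict_mem measurableSet_Ioi] with t ht
    have hlow := wsa_lower φ hanti ha hδ.le ht
    calc ENNReal.ofReal c₀ * ENNReal.ofReal (|f t| / (1 + Real.sqrt t))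
        = g t * ENNReal.ofReal (c₀ / (1 + Real.sqrt t)) := by
          rw [← ENNReal.ofReal_mul hc₀pos.le, ← ENNReal.ofReal_mul (abs_nonneg _)]
          congr 1
          ring
      _ ≤ g t * wsaK φ t := mul_le_mul_right hlow _
  · rw [hI2, ← lintegral_const_mul' _ _ ENNReal.ofReal_ne_top]
    refine lintegral_mono_ae ?_
    filter_upwards [ae_restrict_mem measurableSet_Ioi] with t ht
    have hup := wsa_upper φ hnonneg hanti hL0 hA0 hφle hAb ht
    have hCle : ENNReal.ofReal (C₁ / (1 + Real.sqrt t))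
        ≤ ENNReal.ofReal (max c₀ C₁ / (1 + Real.sqrt t)) := by
      have h1t : (0:ℝ) < 1 + Real.sqrt t := by positivity
      exact ENNReal.ofReal_le_ofReal
        ((div_le_div_iff_of_pos_right h1t).2 (le_max_right _ _))
    calc g t * wsaK φ t
        ≤ g t * ENNReal.ofReal (max c₀ C₁ / (1 + Real.sqrt t)) :=
          mul_le_mul_right (le_trans hup hCle) _
      _ = ENNReal.ofReal (max c₀ C₁) * ENNReal.ofReal (|f t| / (1 + Real.sqrt t)) := by
          rw [← ENNReal.ofReal_mul (le_trans hc₀pos.le (le_max_left _ _)),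
            ← ENNReal.ofReal_mul (abs_nonneg _)]
          congr 1
          ring
end

section
/- Let (B_t)_{t≥0} be a standard one-dimensional Brownian motion started at 0, let 0 < u < ∞, and define the Brownian bridge X_s := B_s − (s/u) B_u for s ∈ [0,u]. Let n ∈ ℕ, c₁, …, cₙ ∈ ℝ, 0 = t₀ < t₁ < ⋯ < tₙ < u, and let f = Σ_{k=1}^n c_k 1_{[t_{k−1}, t_k)} on [0,u]. Then E[(Σ_{k=1}^n c_k (X_{t_k} − X_{t_{k−1}}))²] = ∫₀^u |(π_u f)(s)|² ds, where (π_u f)(s) = f(s) − (1/u) ∫₀^u f(t) dt. -/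
open MeasureTheory ProbabilityTheory Filter Set Real
open scoped NNReal ENNReal

/-- A standard one-dimensional Brownian motion started at 0 under the probability
measure `P`: it starts at `0`, has Gaussian increments `B_t − B_s ∼ N(0, t−s)` for
`0 ≤ s ≤ t`, and has independent increments. -/
structure IsBrownianMotion {Ω : Type*} [MeasurableSpace Ω] (P : Measure Ω)
    (B : ℝ → Ω → ℝ) : Prop where
  isProb : IsProbabilityMeasure P
  start : ∀ ω, B 0 ω = 0
  meas : ∀ t, Measurable (B t)
  incr_law : ∀ s t : ℝ, 0 ≤ s → s ≤ t →
    P.map (fun ω => B t ω - B s ω) = gaussianReal 0 (t - s).toNNReal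
  indep_incr : ∀ u : ℕ → ℝ, 0 ≤ u 0 → Monotone u →
    iIndepFun (fun k ω => B (u (k + 1)) ω - B (u k) ω) P





section part1
lemma my_rpow_two : (fun x : ℝ => x ^ (2:ℝ)) = fun x : ℝ => x ^ 2 := by
  ext x; rw [show (2:ℝ) = ((2:ℕ):ℝ) by norm_num, Real.rpow_natCast]

lemma my_integrable_sq_exp {b : ℝ} (hb : 0 < b) :
    Integrable (fun x : ℝ => x ^ 2 * rexp (-b * x ^ 2)) := by
  have h := integrable_rpow_mul_exp_neg_mul_sq hb (s := 2) (by norm_num)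
  simpa [funext_iff.1 my_rpow_two] using h

lemma my_integral_Ioi_deriv {b : ℝ} (hb : 0 < b) :
    ∫ x in Ioi (0:ℝ), (rexp (-b * x ^ 2) - 2 * b * (x ^ 2 * rexp (-b * x ^ 2))) = 0 := by
  have hderiv : ∀ x ∈ Ioi (0:ℝ), HasDerivAt (fun y : ℝ => y * rexp (-b * y ^ 2))
      (rexp (-b * x ^ 2) - 2 * b * (x ^ 2 * rexp (-b * x ^ 2))) x := by
    intro x _
    have h1 : HasDerivAt (fun y : ℝ => -b * y ^ 2) (-b * (2 * x)) x := by
      simpa using ((hasDerivAt_pow 2 x).const_mul (-b))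
    have h2 : HasDerivAt (fun y : ℝ => rexp (-b * y ^ 2)) (rexp (-b * x ^ 2) * (-b * (2 * x))) x :=
      h1.exp
    have : HasDerivAt (fun y : ℝ => y * rexp (-b * y ^ 2)) _ x := (hasDerivAt_id x).mul h2
    convert this using 1
    simp [id]
    ring
  have hcont : ContinuousWithinAt (fun y : ℝ => y * rexp (-b * y ^ 2)) (Ici 0) 0 :=
    (Continuous.continuousWithinAt (by fun_prop))
  have hint : IntegrableOn (fun x : ℝ => rexp (-b * x ^ 2) - 2 * b * (x ^ 2 * rexp (-b * x ^ 2)))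
      (Ioi 0) := by
    exact ((integrable_exp_neg_mul_sq hb).integrableOn).sub
      (((my_integrable_sq_exp hb).const_mul _).integrableOn)
  have htend : Tendsto (fun y : ℝ => y * rexp (-b * y ^ 2)) atTop (nhds 0) := by
    have h := rpow_mul_exp_neg_mul_sq_isLittleO_exp_neg hb 1
    have h2 : Tendsto (fun x : ℝ => rexp (-(1/2) * x)) atTop (nhds 0) := by
      have : Tendsto (fun x : ℝ => -(1/2) * x) atTop atBot := by
        apply Filter.Tendsto.const_mul_atTop_of_neg (by norm_num : (-(1/2):ℝ) < 0) tendsto_id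
      exact Real.tendsto_exp_atBot.comp this
    have := h.trans_tendsto h2
    refine this.congr' ?_
    filter_upwards with x
    rw [Real.rpow_one]
  have := integral_Ioi_of_hasDerivAt_of_tendsto hcont hderiv hint htend
  simpa using this
end part1

lemma my_integral_even {f : ℝ → ℝ} (hi : Integrable f) (hf : ∀ x, f (-x) = f x) :
    ∫ x : ℝ, f x = 2 * ∫ x in Ioi (0:ℝ), f x := by
  have h1 : ∫ x in Iic (0:ℝ), f x = ∫ x in Ioi (0:ℝ), f x := by
    rw [show (0:ℝ) = -0 by norm_num, ← integral_comp_neg_Ioi]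
    simp only [hf, neg_zero]
  have h2 := integral_add_compl (measurableSet_Iic (a := (0:ℝ))) hi
  rw [compl_Iic] at h2
  rw [← h2, h1]; ring

lemma my_integral_sq_exp {b : ℝ} (hb : 0 < b) :
    ∫ x : ℝ, x ^ 2 * rexp (-b * x ^ 2) = (2 * b)⁻¹ * Real.sqrt (π / b) := by
  have key : ∫ x in Ioi (0:ℝ), x ^ 2 * rexp (-b * x ^ 2)
      = (2 * b)⁻¹ * ∫ x in Ioi (0:ℝ), rexp (-b * x ^ 2) := by
    have h0 := my_integral_Ioi_deriv hb
    rw [integral_sub ((integrable_exp_neg_mul_sq hb).integrableOn)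
      (((my_integrable_sq_exp hb).const_mul _).integrableOn), integral_const_mul, sub_eq_zero] at h0
    rw [h0]
    rw [← mul_assoc, inv_mul_cancel₀ (by positivity), one_mul]
  have hg : (2:ℝ) * ∫ x in Ioi (0:ℝ), rexp (-b * x ^ 2) = Real.sqrt (π / b) := by
    rw [← integral_gaussian b, my_integral_even (integrable_exp_neg_mul_sq hb) (fun x => by ring_nf)]
  rw [my_integral_even (my_integrable_sq_exp hb) (fun x => by ring_nf), key, ← hg]
  ring

lemma my_integral_id_exp {b : ℝ} (hb : 0 < b) :
    ∫ x : ℝ, x * rexp (-b * x ^ 2) = 0 := by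
  have h := integral_neg_eq_self (fun x : ℝ => x * rexp (-b * x ^ 2)) volume
  simp only [neg_neg, neg_sq, neg_mul] at h
  have : ∫ x : ℝ, -(x * rexp (-b * x ^ 2)) = ∫ x : ℝ, x * rexp (-b * x ^ 2) := by
    simpa using h
  rw [integral_neg] at this
  linarith


lemma my_gaussian_pdf_eq {v : ℝ≥0} (x : ℝ) :
    gaussianPDFReal 0 v x = (Real.sqrt (2 * π * v))⁻¹ * rexp (-(2 * (v:ℝ))⁻¹ * x ^ 2) := by
  rw [gaussianPDFReal]
  congr 1
  rw [sub_zero]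
  congr 1
  rw [div_eq_mul_inv]
  ring

lemma my_gaussian_integral {v : ℝ≥0} (hv : v ≠ 0) (g : ℝ → ℝ) :
    ∫ x, g x ∂(gaussianReal 0 v) = ∫ x, gaussianPDFReal 0 v x * g x := by
  rw [gaussianReal_of_var_ne_zero _ hv]
  have h := integral_withDensity_eq_integral_smul (μ := volume)
    (f := fun x => Real.toNNReal (gaussianPDFReal 0 v x))
    ((measurable_gaussianPDFReal 0 v).real_toNNReal) g
  rw [show (volume.withDensity (gaussianPDF 0 v))
      = volume.withDensity (fun x => ((Real.toNNReal (gaussianPDFReal 0 v x) : ℝ≥0) : ℝ≥0∞))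
      from rfl, h]
  congr 1
  ext x
  rw [NNReal.smul_def, smul_eq_mul, Real.coe_toNNReal _ (gaussianPDFReal_nonneg 0 v x)]

lemma my_gaussian_mean {v : ℝ≥0} (hv : v ≠ 0) : ∫ x, x ∂(gaussianReal 0 v) = 0 := by
  have hvpos : 0 < (v:ℝ) := by positivity
  have hb : 0 < (2 * (v:ℝ))⁻¹ := by positivity
  rw [my_gaussian_integral hv]
  calc ∫ x, gaussianPDFReal 0 v x * x
      = ∫ x, (Real.sqrt (2 * π * v))⁻¹ * (x * rexp (-(2 * (v:ℝ))⁻¹ * x ^ 2)) := by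
        congr 1; ext x; rw [my_gaussian_pdf_eq]; ring
    _ = (Real.sqrt (2 * π * v))⁻¹ * ∫ x, x * rexp (-(2 * (v:ℝ))⁻¹ * x ^ 2) := by
        rw [integral_const_mul]
    _ = 0 := by rw [my_integral_id_exp hb, mul_zero]

lemma my_gaussian_sq {v : ℝ≥0} (hv : v ≠ 0) : ∫ x, x ^ 2 ∂(gaussianReal 0 v) = v := by
  have hvpos : 0 < (v:ℝ) := by positivity
  have hb : 0 < (2 * (v:ℝ))⁻¹ := by positivity
  have hsqrt : Real.sqrt (2 * π * (v:ℝ)) ≠ 0 := ne_of_gt (Real.sqrt_pos.2 (by positivity))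
  rw [my_gaussian_integral hv]
  calc ∫ x, gaussianPDFReal 0 v x * x ^ 2
      = ∫ x, (Real.sqrt (2 * π * v))⁻¹ * (x ^ 2 * rexp (-(2 * (v:ℝ))⁻¹ * x ^ 2)) := by
        congr 1; ext x; rw [my_gaussian_pdf_eq]; ring
    _ = (Real.sqrt (2 * π * v))⁻¹ * ((2 * (2 * (v:ℝ))⁻¹)⁻¹
          * Real.sqrt (π / (2 * (v:ℝ))⁻¹)) := by
        rw [integral_const_mul, my_integral_sq_exp hb]
    _ = v := by
        rw [show π / (2 * (v:ℝ))⁻¹ = 2 * π * v by field_simp]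
        rw [show (2 * (2 * (v:ℝ))⁻¹)⁻¹ = v by field_simp]
        field_simp

lemma my_gaussian_memLp {v : ℝ≥0} (hv : v ≠ 0) : MemLp id 2 (gaussianReal 0 v) := by
  have hvpos : 0 < (v:ℝ) := by positivity
  have hb : 0 < (2 * (v:ℝ))⁻¹ := by positivity
  rw [memLp_two_iff_integrable_sq aestronglyMeasurable_id]
  rw [gaussianReal_of_var_ne_zero _ hv]
  rw [show (volume.withDensity (gaussianPDF 0 v))
      = volume.withDensity (fun x => ((Real.toNNReal (gaussianPDFReal 0 v x) : ℝ≥0) : ℝ≥0∞))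
      from rfl,
    integrable_withDensity_iff_integrable_smul ((measurable_gaussianPDFReal 0 v).real_toNNReal)]
  refine (((my_integrable_sq_exp hb).const_mul ((Real.sqrt (2 * π * v))⁻¹)).congr ?_)
  filter_upwards with x
  rw [NNReal.smul_def, smul_eq_mul, Real.coe_toNNReal _ (gaussianPDFReal_nonneg 0 v x),
    my_gaussian_pdf_eq]
  simp only [id]
  ring

lemma my_rv_moments {Ω : Type*} [MeasurableSpace Ω] {P : Measure Ω} {Y : Ω → ℝ} {v : ℝ≥0}
    (hv : v ≠ 0) (hm : Measurable Y) (hY : P.map Y = gaussianReal 0 v) :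
    MemLp Y 2 P ∧ (∫ ω, Y ω ∂P) = 0 ∧ (∫ ω, (Y ω) ^ 2 ∂P) = v := by
  refine ⟨?_, ?_, ?_⟩
  · have := (memLp_map_measure_iff (μ := P) (f := Y) (g := (id : ℝ → ℝ)) aestronglyMeasurable_id
      hm.aemeasurable (p := 2)).1
    rw [hY] at this
    exact this (my_gaussian_memLp hv)
  · have := integral_map (μ := P) (φ := Y) (f := (id : ℝ → ℝ)) hm.aemeasurable aestronglyMeasurable_id
    rw [hY] at this
    simpa using this.symm.trans (my_gaussian_mean hv)
  · have := integral_map (μ := P) (φ := Y) (f := fun x : ℝ => x ^ 2) hm.aemeasurable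
      (continuous_pow 2).aestronglyMeasurable
    rw [hY] at this
    simpa using this.symm.trans (my_gaussian_sq hv)


lemma my_step_piece {a b : ℝ} (hab : a ≤ b) {f : ℝ → ℝ} {C : ℝ}
    (h : ∀ s ∈ Ioo a b, f s = C) :
    IntervalIntegrable f volume a b ∧ (∫ s in a..b, f s) = C * (b - a) := by
  have hb : ∀ᵐ s ∂(volume : Measure ℝ), s ≠ b := by
    rw [ae_iff]
    simpa using measure_singleton b
  have hae : f =ᵐ[volume.restrict (Ioc a b)] fun _ => C := by
    filter_upwards [ae_restrict_mem measurableSet_Ioc, ae_restrict_of_ae hb] with s hs hsb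
    exact h s ⟨hs.1, lt_of_le_of_ne hs.2 hsb⟩
  constructor
  · rw [intervalIntegrable_iff_integrableOn_Ioc_of_le hab]
    exact (integrableOn_const measure_Ioc_lt_top.ne).congr hae.symm
  · rw [intervalIntegral.integral_of_le hab, integral_congr_ae hae, setIntegral_const,
      Real.volume_real_Ioc_of_le hab, smul_eq_mul, mul_comm]


/-- Itô isometry for the Brownian bridge: with the bridge
`X_s = B_s − (s/u) B_u` on `[0,u]` and a step function
`f = Σ c_k 1_{[t_{k−1},t_k)}` with `0 = t₀ < ⋯ < tₙ < u`,
`E[(Σ c_k (X_{t_k} − X_{t_{k−1}}))²] = ∫₀^u |(π_u f)(s)|² ds` where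
`(π_u f)(s) = f(s) − (1/u) ∫₀^u f`. -/
theorem integral_sq_wiener_integral_stepFun_brownianBridge
    {Ω : Type*} [MeasurableSpace Ω] (P : Measure Ω) (B : ℝ → Ω → ℝ)
    (hB : IsBrownianMotion P B) (u : ℝ) (hu : 0 < u)
    (n : ℕ) (c : Fin n → ℝ) (t : Fin (n + 1) → ℝ)
    (ht0 : t 0 = 0) (ht : StrictMono t) (htu : t (Fin.last n) < u)
    (f : ℝ → ℝ)
    (hf : ∀ s, f s = ∑ k : Fin n, if t k.castSucc ≤ s ∧ s < t k.succ then c k else 0) :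
    ∫ ω, (∑ k : Fin n, c k *
        ((B (t k.succ) ω - t k.succ / u * B u ω)
          - (B (t k.castSucc) ω - t k.castSucc / u * B u ω))) ^ 2 ∂P
      = ∫ s in (0 : ℝ)..u, (f s - (1 / u) * ∫ r in (0 : ℝ)..u, f r) ^ 2 := by
  classical
  haveI hP : IsProbabilityMeasure P := hB.isProb
  -- the partition of [0, u]
  set g : ℕ → ℝ := fun k => if h : k < n + 1 then t ⟨k, h⟩ else u with hgdef
  have hgval : ∀ k (h : k < n + 1), g k = t ⟨k, h⟩ := fun k h => dif_pos h
  have hg0 : g 0 = 0 := by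
    rw [hgval 0 n.succ_pos, show (⟨0, n.succ_pos⟩ : Fin (n+1)) = 0 from Fin.ext rfl, ht0]
  have hgn1 : g (n + 1) = u := by simp [hgdef]
  have hglt : ∀ k, k < n + 1 → g k < g (k + 1) := by
    intro k hk
    rcases Nat.lt_or_ge (k + 1) (n + 1) with h | h
    · rw [hgval k hk, hgval (k + 1) h]
      exact ht (by rw [Fin.lt_def]; exact Nat.lt_succ_self k)
    · have hk' : k = n := by omega
      have hk1 : k + 1 = n + 1 := by omega
      rw [hgval k hk, hk1, hgn1, show (⟨k, hk⟩ : Fin (n+1)) = Fin.last n from Fin.ext (by simpa using hk')]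
      exact htu
  have hmono : Monotone g := by
    apply monotone_nat_of_le_succ
    intro k
    rcases Nat.lt_or_ge k (n + 1) with h | h
    · exact (hglt k h).le
    · have h1 : ¬ k < n + 1 := by omega
      have h2 : ¬ k + 1 < n + 1 := by omega
      simp only [hgdef, dif_neg h1, dif_neg h2, le_refl]
  have hgnonneg : ∀ k, 0 ≤ g k := fun k => hg0 ▸ hmono (Nat.zero_le k)
  -- step heights
  set C : ℕ → ℝ := fun k => if h : k < n then c ⟨k, h⟩ else 0 with hCdef
  -- value of f on the open pieces
  have hfval : ∀ k, k < n + 1 → ∀ s ∈ Ioo (g k) (g (k + 1)), f s = C k := by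
    intro k hk s hs
    rw [hf s]
    rcases Nat.lt_or_ge k n with hkn | hkn
    · have hk1 : k + 1 < n + 1 := by omega
      rw [Finset.sum_eq_single (⟨k, hkn⟩ : Fin n)]
      · rw [if_pos, hCdef]
        · simp [hkn]
        constructor
        · calc t (Fin.castSucc ⟨k, hkn⟩) = g k := by
                rw [hgval k hk]; exact congrArg t (Fin.ext rfl)
            _ ≤ s := hs.1.le
        · calc s < g (k + 1) := hs.2
            _ = t (Fin.succ ⟨k, hkn⟩) := by
                rw [hgval (k+1) hk1]; exact congrArg t (Fin.ext rfl)
      · intro j _ hj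
        rw [if_neg]
        intro hcond
        rcases Nat.lt_or_ge j.val k with hjk | hjk
        · have h1 : t j.succ ≤ t ⟨k, hk⟩ :=
            ht.monotone (by rw [Fin.le_def, Fin.val_succ]; exact hjk)
          have h2 : t j.succ ≤ g k := by rw [hgval k hk]; exact h1
          exact absurd hcond.2 (not_lt.2 (h2.trans hs.1.le))
        · have hjk' : k + 1 ≤ j.val := by
            rcases Nat.lt_or_ge k j.val with h' | h'
            · omega
            · exfalso; exact hj (Fin.ext (show (j : ℕ) = k by omega))
          have h1 : t ⟨k + 1, hk1⟩ ≤ t j.castSucc :=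
            ht.monotone (by rw [Fin.le_def, Fin.coe_castSucc]; exact hjk')
          have h2 : g (k + 1) ≤ t j.castSucc := by rw [hgval (k+1) hk1]; exact h1
          exact absurd hcond.1 (not_le.2 (hs.2.trans_le h2))
      · intro h
        exact absurd (Finset.mem_univ _) h
    · have hk' : k = n := by omega
      have hzero : ∀ j : Fin n, (if t j.castSucc ≤ s ∧ s < t j.succ then c j else 0) = 0 := by
        intro j
        rw [if_neg]
        intro hcond
        have h1 : t j.succ ≤ t (Fin.last n) := ht.monotone (Fin.le_last _)
        have h2 : t (Fin.last n) = g k := by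
          rw [hgval k hk]; exact congrArg t (Fin.ext (by simpa using hk'.symm))
        have h3 : t j.succ ≤ g k := h2 ▸ h1
        exact absurd hcond.2 (not_lt.2 (h3.trans hs.1.le))
      rw [Finset.sum_eq_zero (fun j _ => hzero j), hCdef]
      simp [show ¬ k < n by omega]
  -- step integrals
  have hpiece : ∀ k, k < n + 1 →
      IntervalIntegrable f volume (g k) (g (k+1)) ∧
      (∫ s in g k..g (k+1), f s) = C k * (g (k+1) - g k) :=
    fun k hk => my_step_piece (hglt k hk).le (hfval k hk)
  have hI : (∫ r in (0:ℝ)..u, f r) = ∑ k ∈ Finset.range (n+1), C k * (g (k+1) - g k) := by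
    rw [← hg0, ← hgn1, ← intervalIntegral.sum_integral_adjacent_intervals
      (fun k hk => (hpiece k hk).1)]
    exact Finset.sum_congr rfl fun k hk => (hpiece k (Finset.mem_range.1 hk)).2
  set m : ℝ := (1 / u) * ∫ r in (0:ℝ)..u, f r with hmdef
  set d : ℕ → ℝ := fun k => C k - m with hddef
  have hpiece2 : ∀ k, k < n + 1 →
      IntervalIntegrable (fun s => (f s - m)^2) volume (g k) (g (k+1)) ∧
      (∫ s in g k..g (k+1), (f s - m)^2) = d k ^ 2 * (g (k+1) - g k) :=
    fun k hk => my_step_piece (hglt k hk).le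
      (fun s hs => by rw [hfval k hk s hs, hddef])
  have hRHS : (∫ s in (0:ℝ)..u, (f s - m)^2)
      = ∑ k ∈ Finset.range (n+1), d k ^ 2 * (g (k+1) - g k) := by
    rw [← hg0, ← hgn1, ← intervalIntegral.sum_integral_adjacent_intervals
      (fun k hk => (hpiece2 k hk).1)]
    exact Finset.sum_congr rfl fun k hk => (hpiece2 k (Finset.mem_range.1 hk)).2
  -- increments of Brownian motion along the partition
  set Y : ℕ → Ω → ℝ := fun k ω => B (g (k+1)) ω - B (g k) ω with hYdef
  have hYmeas : ∀ k, Measurable (Y k) := fun k => (hB.meas _).sub (hB.meas _)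
  have hmom : ∀ k, k < n + 1 → MemLp (Y k) 2 P ∧ (∫ ω, Y k ω ∂P) = 0 ∧
      (∫ ω, (Y k ω)^2 ∂P) = g (k+1) - g k := by
    intro k hk
    have hpos : (0:ℝ) < g (k+1) - g k := by linarith [hglt k hk]
    have hv : ((g (k+1) - g k).toNNReal) ≠ 0 := by
      simp only [ne_eq, Real.toNNReal_eq_zero, not_le]
      exact hpos
    have hlaw : P.map (Y k) = gaussianReal 0 (g (k+1) - g k).toNNReal :=
      hB.incr_law (g k) (g (k+1)) (hgnonneg k) (hglt k hk).le
    obtain ⟨h1, h2, h3⟩ := my_rv_moments hv (hYmeas k) hlaw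
    exact ⟨h1, h2, by rw [h3, Real.coe_toNNReal _ hpos.le]⟩
  have hindep : iIndepFun Y P :=
    hB.indep_incr g hg0.ge hmono
  -- pointwise identity
  have e1 : ∀ k : Fin n, g k.val = t k.castSucc := by
    intro k
    rw [hgval _ (k.isLt.trans (Nat.lt_succ_self n))]
    exact congrArg t (Fin.ext rfl)
  have e2 : ∀ k : Fin n, g (k.val + 1) = t k.succ := by
    intro k
    have hk2 : (k : ℕ) + 1 < n + 1 := by omega
    rw [hgval _ hk2]
    exact congrArg t (Fin.ext rfl)
  have e3 : ∀ k : Fin n, C k.val = c k := by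
    intro k
    simp [hCdef, k.isLt]
  have hY' : ∀ (k : Fin n) (ω : Ω), Y k.val ω = B (t k.succ) ω - B (t k.castSucc) ω := by
    intro k ω
    rw [hYdef]
    simp only []
    rw [e1 k, e2 k]
  have hCn : C n = 0 := by simp [hCdef]
  have hsum_eq : ∑ k ∈ Finset.range (n+1), C k * (g (k+1) - g k)
      = ∑ k : Fin n, c k * (t k.succ - t k.castSucc) := by
    rw [Finset.sum_range_succ, hCn, zero_mul, add_zero,
      ← Fin.sum_univ_eq_sum_range (fun k => C k * (g (k+1) - g k)) n]
    exact Finset.sum_congr rfl fun k _ => by rw [e1 k, e2 k, e3 k]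
  have hmu : m * u = ∑ k : Fin n, c k * (t k.succ - t k.castSucc) := by
    rw [hmdef, hI, hsum_eq]
    field_simp
  have hpt : ∀ ω, (∑ k : Fin n, c k * ((B (t k.succ) ω - t k.succ / u * B u ω)
      - (B (t k.castSucc) ω - t k.castSucc / u * B u ω)))
      = ∑ k ∈ Finset.range (n+1), d k * Y k ω := by
    intro ω
    have htel : ∑ k ∈ Finset.range (n+1), Y k ω = B u ω := by
      have h := Finset.sum_range_sub (f := fun k => B (g k) ω) (n+1)
      calc ∑ k ∈ Finset.range (n+1), Y k ω
          = B (g (n+1)) ω - B (g 0) ω := h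
        _ = B u ω := by rw [hgn1, hg0, hB.start ω, sub_zero]
    have lhs_eq : (∑ k : Fin n, c k * ((B (t k.succ) ω - t k.succ / u * B u ω)
        - (B (t k.castSucc) ω - t k.castSucc / u * B u ω)))
        = (∑ k ∈ Finset.range n, C k * Y k ω) - m * B u ω := by
      calc (∑ k : Fin n, c k * ((B (t k.succ) ω - t k.succ / u * B u ω)
          - (B (t k.castSucc) ω - t k.castSucc / u * B u ω)))
          = ∑ k : Fin n, (C k.val * Y k.val ω
              - (c k * (t k.succ - t k.castSucc) / u) * B u ω) := by
            refine Finset.sum_congr rfl fun k _ => ?_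
            rw [hY' k, e3 k]
            ring
        _ = (∑ k : Fin n, C k.val * Y k.val ω)
              - (∑ k : Fin n, c k * (t k.succ - t k.castSucc)) / u * B u ω := by
            rw [Finset.sum_sub_distrib]
            congr 1
            rw [← Finset.sum_mul, ← Finset.sum_div]
        _ = (∑ k ∈ Finset.range n, C k * Y k ω) - m * B u ω := by
            rw [Fin.sum_univ_eq_sum_range (fun k => C k * Y k ω) n, ← hmu]
            congr 1
            rw [mul_comm m u]
            field_simp
    have rhs_eq : (∑ k ∈ Finset.range (n+1), d k * Y k ω)
        = (∑ k ∈ Finset.range n, C k * Y k ω) - m * B u ω := by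
      calc ∑ k ∈ Finset.range (n+1), d k * Y k ω
          = ∑ k ∈ Finset.range (n+1), (C k * Y k ω - m * Y k ω) := by
            refine Finset.sum_congr rfl fun k _ => ?_
            rw [hddef]
            ring
        _ = (∑ k ∈ Finset.range (n+1), C k * Y k ω)
              - m * ∑ k ∈ Finset.range (n+1), Y k ω := by
            rw [Finset.sum_sub_distrib, Finset.mul_sum]
        _ = (∑ k ∈ Finset.range n, C k * Y k ω) - m * B u ω := by
            rw [Finset.sum_range_succ, hCn, zero_mul, add_zero, htel]
    rw [lhs_eq, rhs_eq]
  -- pass to the sum of independent variables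
  have hgoal1 : (∫ ω, (∑ k : Fin n, c k * ((B (t k.succ) ω - t k.succ / u * B u ω)
      - (B (t k.castSucc) ω - t k.castSucc / u * B u ω)))^2 ∂P)
      = ∫ ω, (∑ k ∈ Finset.range (n+1), d k * Y k ω)^2 ∂P :=
    integral_congr_ae (Filter.Eventually.of_forall fun ω => congrArg (fun x : ℝ => x ^ 2) (hpt ω))
  set Z : ℕ → Ω → ℝ := fun k ω => d k * Y k ω with hZdef
  have hZmem : ∀ k ∈ Finset.range (n+1), MemLp (Z k) 2 P :=
    fun k hk => ((hmom k (Finset.mem_range.1 hk)).1.const_mul (d k))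
  have hSfun : (∑ k ∈ Finset.range (n+1), Z k)
      = fun ω => ∑ k ∈ Finset.range (n+1), d k * Y k ω := by
    funext ω
    simp [hZdef]
  have hSmem : MemLp (∑ k ∈ Finset.range (n+1), Z k) 2 P :=
    memLp_finset_sum' _ hZmem
  have hES : (∫ ω, (∑ k ∈ Finset.range (n+1), Z k) ω ∂P) = 0 := by
    rw [hSfun]
    rw [integral_finset_sum _ (fun k hk =>
      (((hmom k (Finset.mem_range.1 hk)).1.const_mul (d k)).integrable one_le_two))]
    refine Finset.sum_eq_zero fun k hk => ?_
    rw [integral_const_mul, (hmom k (Finset.mem_range.1 hk)).2.1, mul_zero]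
  have hpair : Set.Pairwise ↑(Finset.range (n+1))
      (fun i j => IndepFun (Z i) (Z j) P) := by
    intro i _ j _ hij
    exact (hindep.indepFun hij).comp (measurable_const_mul (d i)) (measurable_const_mul (d j))
  have hvar := IndepFun.variance_sum (μ := P) hZmem hpair
  have hVarZ : ∀ k ∈ Finset.range (n+1), variance (Z k) P
      = d k ^ 2 * (g (k+1) - g k) := by
    intro k hk
    have hk' := Finset.mem_range.1 hk
    rw [hZdef]
    rw [variance_const_mul]
    congr 1
    rw [variance_eq_sub (hmom k hk').1]
    have hmean : (∫ ω, Y k ω ∂P) = 0 := (hmom k hk').2.1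
    have hsq : (∫ ω, (Y k ω)^2 ∂P) = g (k+1) - g k := (hmom k hk').2.2
    simp only [Pi.pow_apply]
    rw [hmean, hsq]
    ring
  have hS2 : (∫ ω, (∑ k ∈ Finset.range (n+1), d k * Y k ω)^2 ∂P)
      = ∑ k ∈ Finset.range (n+1), d k ^ 2 * (g (k+1) - g k) := by
    have h1 := variance_eq_sub hSmem
    rw [hES] at h1
    have h2 : (∫ ω, ((∑ k ∈ Finset.range (n+1), Z k) ω)^2 ∂P)
        = variance (∑ k ∈ Finset.range (n+1), Z k) P := by
      rw [h1]
      simp only [Pi.pow_apply]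
      ring_nf
    calc (∫ ω, (∑ k ∈ Finset.range (n+1), d k * Y k ω)^2 ∂P)
        = (∫ ω, ((∑ k ∈ Finset.range (n+1), Z k) ω)^2 ∂P) := by rw [hSfun]
      _ = variance (∑ k ∈ Finset.range (n+1), Z k) P := h2
      _ = ∑ k ∈ Finset.range (n+1), variance (Z k) P := hvar
      _ = ∑ k ∈ Finset.range (n+1), d k ^ 2 * (g (k+1) - g k) :=
          Finset.sum_congr rfl hVarZ
  rw [hgoal1, hS2, hRHS]
end
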